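/- Let X be a metric space, let f_1, …, f_N : X → X (N ≥ 1) be maps each Lipschitz with constant ≤ r where 0 < r < 1, and let K be a nonempty compact set with K = f_1(K) ∪ … ∪ f_N(K). Then the Hausdorff dimension of K satisfies dim_H K ≤ log N / log(1/r). -/

import Mathlib

open NNReal

open scoped ENNReal

private def ifsComp {X : Type*} {N : ℕ} (f : Fin N → X → X) : ∀ n, (Fin n → Fin N) → X → X
  | 0, _ => id
  | n+1, w => f (w 0) ∘ ifsComp f n (w ∘ Fin.succ)

private lemma ifsComp_lip {X : Type*} [MetricSpace X] {N : ℕ} {f : Fin N → X → X} {r : ℝ≥0}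
    (hf : ∀ i, LipschitzWith r (f i)) : ∀ n (w : Fin n → Fin N),
    LipschitzWith (r ^ n) (ifsComp f n w)
  | 0, _ => by simpa [ifsComp] using LipschitzWith.id
  | n+1, w => by
    rw [pow_succ']
    exact (hf (w 0)).comp (ifsComp_lip hf n _)

private lemma ifsComp_cover {X : Type*} [MetricSpace X] {N : ℕ} {f : Fin N → X → X}
    {K : Set X} (hK : K = ⋃ i, f i '' K) :
    ∀ n, K ⊆ ⋃ w : Fin n → Fin N, ifsComp f n w '' K
  | 0 => fun x hx => Set.mem_iUnion.2 ⟨Fin.elim0, by simpa [ifsComp] using hx⟩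
  | n+1 => fun x hx => by
    rw [hK] at hx
    obtain ⟨i, y, hyK, hyx⟩ := Set.mem_iUnion.1 hx
    obtain ⟨w, z, hzK, hzy⟩ := Set.mem_iUnion.1 (ifsComp_cover hK n hyK)
    refine Set.mem_iUnion.2 ⟨Fin.cons i w, z, hzK, ?_⟩
    simp only [ifsComp, Function.comp_apply]
    rw [Fin.cons_zero]
    have : (Fin.cons i w ∘ Fin.succ : Fin n → Fin N) = w := by
      funext j; simp [Fin.cons_succ]
    rw [this, hzy, hyx]

/-- Upper bound for the Hausdorff dimension of the attractor of an IFS of `N` maps, each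
Lipschitz with constant at most `r` where `0 < r < 1`:
`dim_H K ≤ log N / log (1/r)`. -/
theorem ifs_attractor_dimH_le
    {X : Type*} [MetricSpace X] {N : ℕ} (hN : 1 ≤ N)
    (f : Fin N → X → X) (r : ℝ≥0) (hr0 : 0 < r) (hr1 : r < 1)
    (hf : ∀ i, LipschitzWith r (f i))
    (K : Set X) (hKne : K.Nonempty) (hKc : IsCompact K)
    (hK : K = ⋃ i, f i '' K) :
    dimH K ≤ ENNReal.ofReal (Real.log N / Real.log (1 / (r : ℝ))) := by
  borelize X
  set s : ℝ := Real.log N / Real.log (1 / (r : ℝ)) with hs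
  have hrpos : (0:ℝ) < r := hr0
  have hlogpos : 0 < Real.log (1 / (r : ℝ)) := by
    apply Real.log_pos
    rw [one_lt_div hrpos]
    exact_mod_cast hr1
  have hNpos : (0:ℝ) < N := by exact_mod_cast hN
  have hs0 : 0 ≤ s := div_nonneg (Real.log_natCast_nonneg N) hlogpos.le
  set d : ℝ≥0 := s.toNNReal with hd
  have hds : (d : ℝ) = s := Real.coe_toNNReal _ hs0
  -- key: (r : ℝ) ^ s = 1 / N
  have hrs : (r : ℝ) ^ s = (N : ℝ)⁻¹ := by
    rw [Real.rpow_def_of_pos hrpos]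
    have hlog : Real.log (1 / (r:ℝ)) = -Real.log (r:ℝ) := by
      rw [one_div, Real.log_inv]
    have hlr : Real.log (r:ℝ) ≠ 0 := (Real.log_neg hrpos (by exact_mod_cast hr1)).ne
    have : s * Real.log (r:ℝ) = -Real.log N := by
      rw [hs, hlog]
      field_simp
    rw [mul_comm, this, Real.exp_neg, Real.exp_log hNpos]
  have hNne0 : ((N:ℝ≥0)) ≠ 0 := Nat.cast_ne_zero.2 (by omega)
  have hrsE : (r : ℝ≥0∞) ^ (d : ℝ) = ((N : ℝ≥0∞))⁻¹ := by
    have h1 : r ^ (d:ℝ) = (N:ℝ≥0)⁻¹ := by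
      apply NNReal.coe_injective
      push_cast [NNReal.coe_rpow]
      rw [hds]; exact hrs
    rw [← ENNReal.coe_rpow_of_ne_zero hr0.ne', h1, ENNReal.coe_inv hNne0,
      ENNReal.coe_natCast]
  set D : ℝ≥0∞ := EMetric.diam K with hD
  have hDne : D ≠ ∞ := hKc.isBounded.ediam_ne_top
  refine le_trans ?_ (le_of_eq (by rw [ENNReal.ofReal, ← hd]))
  apply dimH_le_of_hausdorffMeasure_ne_top (d := d)
  have hcov : ∀ n : ℕ, K ⊆ ⋃ w : Fin n → Fin N, ifsComp f n w '' K := ifsComp_cover hK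
  have hdiam : ∀ (n : ℕ) (w : Fin n → Fin N),
      EMetric.diam (ifsComp f n w '' K) ≤ (r : ℝ≥0∞) ^ n * D := by
    intro n w
    have := (ifsComp_lip hf n w).ediam_image_le K
    simp at this
    exact this
  have hle : MeasureTheory.Measure.hausdorffMeasure (d:ℝ) K ≤
      Filter.liminf (fun n : ℕ => ∑ w : Fin n → Fin N,
        EMetric.diam (ifsComp f n w '' K) ^ (d:ℝ)) Filter.atTop := by
    apply MeasureTheory.Measure.hausdorffMeasure_le_liminf_sum (d:ℝ) K
      (fun n : ℕ => (r : ℝ≥0∞) ^ n * D) ?_ (fun n w => ifsComp f n w '' K)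
      (Filter.Eventually.of_forall fun n => hdiam n)
      (Filter.Eventually.of_forall hcov)
    have : Filter.Tendsto (fun n : ℕ => (r : ℝ≥0∞) ^ n) Filter.atTop (nhds 0) :=
      ENNReal.tendsto_pow_atTop_nhds_zero_of_lt_one (by exact_mod_cast hr1)
    simpa using ENNReal.Tendsto.mul_const this (Or.inr hDne)
  have hsum : ∀ n : ℕ, (∑ w : Fin n → Fin N,
      EMetric.diam (ifsComp f n w '' K) ^ (d:ℝ)) ≤ D ^ (d:ℝ) := by
    intro n
    calc (∑ w : Fin n → Fin N, EMetric.diam (ifsComp f n w '' K) ^ (d:ℝ))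
        ≤ ∑ _w : Fin n → Fin N, ((r : ℝ≥0∞) ^ n * D) ^ (d:ℝ) :=
          Finset.sum_le_sum fun w _ =>
            ENNReal.rpow_le_rpow (hdiam n w) d.coe_nonneg
      _ = (N : ℝ≥0∞) ^ n * ((r : ℝ≥0∞) ^ n * D) ^ (d:ℝ) := by
          simp [Finset.sum_const, Fintype.card_fun, mul_comm]
      _ = D ^ (d:ℝ) := by
          rw [ENNReal.mul_rpow_of_nonneg _ _ d.coe_nonneg,
            ← ENNReal.rpow_natCast (r : ℝ≥0∞) n, ← ENNReal.rpow_mul,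
            mul_comm (n:ℝ) (d:ℝ), ENNReal.rpow_mul, hrsE, ENNReal.rpow_natCast,
            ← mul_assoc, ← mul_pow,
            ENNReal.mul_inv_cancel (Nat.cast_ne_zero.2 (by omega)) (ENNReal.natCast_ne_top N),
            one_pow, one_mul]
  have : MeasureTheory.Measure.hausdorffMeasure (d:ℝ) K ≤ D ^ (d:ℝ) := by
    refine hle.trans ?_
    calc Filter.liminf (fun n : ℕ => ∑ w : Fin n → Fin N,
          EMetric.diam (ifsComp f n w '' K) ^ (d:ℝ)) Filter.atTop
        ≤ Filter.liminf (fun _ : ℕ => D ^ (d:ℝ)) Filter.atTop :=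
          Filter.liminf_le_liminf (Filter.Eventually.of_forall hsum)
      _ = D ^ (d:ℝ) := Filter.liminf_const _
  exact (this.trans_lt (ENNReal.rpow_lt_top_of_nonneg d.coe_nonneg hDne)).ne
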